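/- The multiple Bernoulli polynomials satisfy the difference relation B_{r,n}(z + ω_j | ω₁, ..., ω_r) − B_{r,n}(z | ω₁, ..., ω_r) = n · B_{r−1,n−1}(z | ω₁, ..., ω̂_j, ..., ω_r), where ω̂_j denotes omission of the j-th parameter. -/

import Mathlib

open Complex

/-- The power series of `e^{wt}` in `t`. -/
noncomputable def expPS (w : ℂ) : PowerSeries ℂ :=
  PowerSeries.mk fun n => w ^ n / n.factorial

/-- `B : ℕ → ℂ` is the sequence of multiple Bernoulli polynomial values
`B n = B_{r,n}(z | ω)` iff the defining generating-function identity
`t^r e^{zt} = (∏_k (e^{ω_k t} - 1)) · Σ_n B n t^n/n!` holds. -/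
def IsMultBernoulli (r : ℕ) (z : ℂ) (ω : Fin r → ℂ) (B : ℕ → ℂ) : Prop :=
  (∏ k, (expPS (ω k) - 1)) * PowerSeries.mk (fun n => B n / n.factorial)
    = (PowerSeries.X : PowerSeries ℂ) ^ r * expPS z

lemma expPS_eq_rescale_exp (w : ℂ) : expPS w = PowerSeries.rescale w (PowerSeries.exp ℂ) := by
  ext n
  simp [expPS, PowerSeries.exp, PowerSeries.coeff_rescale, div_eq_mul_inv,
    Algebra.algebraMap_eq_smul_one]

lemma expPS_add (a b : ℂ) : expPS (a + b) = expPS a * expPS b := by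
  rw [expPS_eq_rescale_exp, expPS_eq_rescale_exp, expPS_eq_rescale_exp,
    PowerSeries.exp_mul_exp_eq_exp_add]

lemma expPS_sub_one_ne_zero {w : ℂ} (hw : w ≠ 0) : expPS w - 1 ≠ 0 := by
  intro h
  have := congrArg (PowerSeries.coeff (R := ℂ) 1) h
  simp [expPS] at this
  exact hw this

/-- Difference relation:
`B_{r+1,n}(z + ω_j | ω) − B_{r+1,n}(z | ω) = n · B_{r,n−1}(z | ω with ω_j omitted)`. -/
theorem multBernoulli_diff (r : ℕ) (z : ℂ) (ω : Fin (r + 1) → ℂ) (j : Fin (r + 1))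
    (hω : ∀ k, ω k ≠ 0)
    (B B' B'' : ℕ → ℂ)
    (hB : IsMultBernoulli (r + 1) z ω B)
    (hB' : IsMultBernoulli (r + 1) (z + ω j) ω B')
    (hB'' : IsMultBernoulli r z (fun k => ω (j.succAbove k)) B'') :
    ∀ n : ℕ, 1 ≤ n → B' n - B n = (n : ℂ) * B'' (n - 1) := by
  unfold IsMultBernoulli at hB hB' hB''
  set Q : PowerSeries ℂ := ∏ k, (expPS (ω (j.succAbove k)) - 1) with hQ
  have hsplit : (∏ k, (expPS (ω k) - 1)) = (expPS (ω j) - 1) * Q := by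
    rw [hQ, Fin.prod_univ_succAbove (fun k => (expPS (ω k) - 1)) j]
  have hQne : Q ≠ 0 := by
    rw [hQ]
    exact Finset.prod_ne_zero_iff.2 fun k _ => expPS_sub_one_ne_zero (hω _)
  have hEne : expPS (ω j) - 1 ≠ 0 := expPS_sub_one_ne_zero (hω j)
  -- key power series identity
  have key : PowerSeries.mk (fun n => B' n / n.factorial)
      - PowerSeries.mk (fun n => B n / n.factorial)
      = PowerSeries.X * PowerSeries.mk (fun n => B'' n / n.factorial) := by
    have h1 : (∏ k, (expPS (ω k) - 1)) *
        (PowerSeries.mk (fun n => B' n / n.factorial)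
          - PowerSeries.mk (fun n => B n / n.factorial))
        = (expPS (ω j) - 1) * (Q * (PowerSeries.X *
            PowerSeries.mk (fun n => B'' n / n.factorial))) := by
      rw [mul_sub, hB, hB', expPS_add]
      rw [show Q * (PowerSeries.X * PowerSeries.mk (fun n => B'' n / n.factorial))
            = PowerSeries.X * (Q * PowerSeries.mk (fun n => B'' n / n.factorial)) by ring,
          hB'']
      ring
    rw [hsplit, mul_assoc] at h1
    have h2 := mul_left_cancel₀ hEne h1
    exact mul_left_cancel₀ hQne h2
  intro n hn
  obtain ⟨m, rfl⟩ := Nat.exists_eq_add_of_le hn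
  have hc := congrArg (PowerSeries.coeff (R := ℂ) (1 + m)) key
  rw [add_comm 1 m] at hc
  simp only [map_sub, PowerSeries.coeff_mk, PowerSeries.coeff_succ_X_mul] at hc
  have hfac : ((m + 1).factorial : ℂ) ≠ 0 := by exact_mod_cast (m + 1).factorial_ne_zero
  have hfac' : ((m).factorial : ℂ) ≠ 0 := by exact_mod_cast m.factorial_ne_zero
  have : B' (m + 1) - B (m + 1) = (m + 1).factorial * (B'' m / m.factorial) := by
    rw [← hc]; field_simp
  rw [add_comm 1 m, Nat.add_sub_cancel, this, Nat.factorial_succ]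
  push_cast
  field_simp
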